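/- Let N(x,y) = N₁(x)y + N₋₁(x)ȳ and S(x,y) = A₁(x)y + A₀(x) + A₋₁(x)ȳ where N₁, A₁, A₀, A₋₁ ∈ ℚ[x, x⁻¹] are Laurent polynomials, N₋₁ ∈ ℚ(x) is a rational function, and the denominator of N₋₁ divides A₁ in ℚ[x, x⁻¹]. Then for all j ∈ ℕ, the part of N·S^j with positive powers of y (extracting terms y^m with m > 0, with coefficients in ℚ(x)) lies in ℚ[x, x⁻¹, y]. -/

import Mathlib

/-- A rational function is a Laurent polynomial in `x`: `p(x)/x^k` for a polynomial `p`. -/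
def IsLaurentPoly (r : RatFunc ℚ) : Prop :=
  ∃ (p : Polynomial ℚ) (k : ℕ),
    r = algebraMap (Polynomial ℚ) (RatFunc ℚ) p / RatFunc.X ^ k

lemma lp_zero : IsLaurentPoly 0 := ⟨0, 0, by simp⟩

lemma lp_alg (p : Polynomial ℚ) : IsLaurentPoly (algebraMap (Polynomial ℚ) (RatFunc ℚ) p) :=
  ⟨p, 0, by simp⟩

lemma lp_add {a b : RatFunc ℚ} (ha : IsLaurentPoly a) (hb : IsLaurentPoly b) :
    IsLaurentPoly (a + b) := by
  obtain ⟨p, k, rfl⟩ := ha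
  obtain ⟨q, l, rfl⟩ := hb
  refine ⟨p * Polynomial.X ^ l + q * Polynomial.X ^ k, k + l, ?_⟩
  have hX : (RatFunc.X : RatFunc ℚ) ≠ 0 := RatFunc.X_ne_zero
  have hx : algebraMap (Polynomial ℚ) (RatFunc ℚ) Polynomial.X = RatFunc.X := RatFunc.algebraMap_X
  rw [div_add_div _ _ (pow_ne_zero k hX) (pow_ne_zero l hX), map_add, map_mul, map_mul,
    map_pow, map_pow, hx, ← pow_add]
  congr 1
  ring

lemma lp_mul {a b : RatFunc ℚ} (ha : IsLaurentPoly a) (hb : IsLaurentPoly b) :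
    IsLaurentPoly (a * b) := by
  obtain ⟨p, k, rfl⟩ := ha
  obtain ⟨q, l, rfl⟩ := hb
  refine ⟨p * q, k + l, ?_⟩
  rw [map_mul, div_mul_div_comm, pow_add]

/-- Let `N = N1(x)·y + Nm1(x)·y⁻¹` and `S = A1(x)·y + A0(x) + Am1(x)·y⁻¹`, viewed as
Laurent polynomials in `y` (elements of `AddMonoidAlgebra (ℚ(x)) ℤ`), where `N1, A1, A0, Am1`
are Laurent polynomials in `x`, `Nm1 ∈ ℚ(x)`, and the denominator of `Nm1` divides `A1` in
`ℚ[x,x⁻¹]`.  Then for every `j ∈ ℕ`, each coefficient of `N·S^j` on a power `y^m` with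
`m > 0` is a Laurent polynomial in `x`. -/
theorem positive_part_laurent
    (N1 A1 A0 Am1 : RatFunc ℚ) (Nm1 : RatFunc ℚ)
    (hN1 : IsLaurentPoly N1) (hA1 : IsLaurentPoly A1)
    (hA0 : IsLaurentPoly A0) (hAm1 : IsLaurentPoly Am1)
    (hdiv : ∃ B : RatFunc ℚ, IsLaurentPoly B ∧
      A1 = algebraMap (Polynomial ℚ) (RatFunc ℚ) Nm1.denom * B)
    (N S : AddMonoidAlgebra (RatFunc ℚ) ℤ)
    (hN : N = AddMonoidAlgebra.single 1 N1 + AddMonoidAlgebra.single (-1) Nm1)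
    (hS : S = AddMonoidAlgebra.single 1 A1 + AddMonoidAlgebra.single 0 A0 +
      AddMonoidAlgebra.single (-1) Am1) :
    ∀ (j : ℕ) (m : ℤ), 0 < m → IsLaurentPoly ((N * S ^ j).coeff m) := by
  obtain ⟨B, hB, hA1eq⟩ := hdiv
  -- key claim about coefficients of S ^ j
  have key : ∀ j : ℕ, ∀ k : ℤ, IsLaurentPoly ((S ^ j).coeff k) ∧
      (1 ≤ k → ∃ C : RatFunc ℚ, IsLaurentPoly C ∧ (S ^ j).coeff k = A1 * C) := by
    intro j
    induction j with
    | zero =>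
      intro k
      have h1 : ((S ^ 0).coeff k) = if (0 : ℤ) = k then 1 else 0 := by
        rw [pow_zero, AddMonoidAlgebra.one_def, AddMonoidAlgebra.coeff_single, Finsupp.single_apply]
      constructor
      · rw [h1]
        by_cases hk : (0 : ℤ) = k
        · rw [if_pos hk]; exact ⟨1, 0, by simp⟩
        · rw [if_neg hk]; exact lp_zero
      · intro hk
        refine ⟨0, lp_zero, ?_⟩
        rw [h1, if_neg (by omega), mul_zero]
    | succ j ih =>
      intro k
      have hpow : S ^ (j + 1) = S * S ^ j := by rw [pow_succ, mul_comm]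
      have hcoeff : ∀ y : ℤ, (S ^ (j+1)).coeff y =
          A1 * (S ^ j).coeff (y - 1) + A0 * (S ^ j).coeff y + Am1 * (S ^ j).coeff (y + 1) := by
        intro y
        rw [hpow, hS, add_mul, add_mul, AddMonoidAlgebra.coeff_add, AddMonoidAlgebra.coeff_add, Finsupp.add_apply, Finsupp.add_apply,
          AddMonoidAlgebra.coeff_single_mul_apply, AddMonoidAlgebra.coeff_single_mul_apply,
          AddMonoidAlgebra.coeff_single_mul_apply]
        simp only [neg_neg, neg_zero, zero_add]
        rw [show (-1 : ℤ) + y = y - 1 by ring, show (1 : ℤ) + y = y + 1 by ring]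
      constructor
      · rw [hcoeff]
        exact lp_add (lp_add (lp_mul hA1 (ih _).1) (lp_mul hA0 (ih _).1))
          (lp_mul hAm1 (ih _).1)
      · intro hk
        obtain ⟨C0, hC0, hC0eq⟩ := (ih k).2 hk
        obtain ⟨C1, hC1, hC1eq⟩ := (ih (k + 1)).2 (by omega)
        refine ⟨(S ^ j).coeff (k - 1) + A0 * C0 + Am1 * C1,
          lp_add (lp_add (ih _).1 (lp_mul hA0 hC0)) (lp_mul hAm1 hC1), ?_⟩
        rw [hcoeff, hC0eq, hC1eq]; ring
  intro j m hm
  have hcoeff : (N * S ^ j).coeff m = N1 * (S ^ j).coeff (m - 1) + Nm1 * (S ^ j).coeff (m + 1) := by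
    rw [hN, add_mul, AddMonoidAlgebra.coeff_add, Finsupp.add_apply, AddMonoidAlgebra.coeff_single_mul_apply,
      AddMonoidAlgebra.coeff_single_mul_apply]
    simp only [neg_neg]
    rw [show (-1 : ℤ) + m = m - 1 by ring, show (1 : ℤ) + m = m + 1 by ring]
  obtain ⟨C, hC, hCeq⟩ := (key j (m + 1)).2 (by omega)
  rw [hcoeff, hCeq, hA1eq]
  have hdenom : Nm1 * algebraMap (Polynomial ℚ) (RatFunc ℚ) Nm1.denom =
      algebraMap (Polynomial ℚ) (RatFunc ℚ) Nm1.num := by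
    have hne : algebraMap (Polynomial ℚ) (RatFunc ℚ) Nm1.denom ≠ 0 := by
      simpa using Nm1.denom_ne_zero
    have h2 := RatFunc.num_div_denom Nm1
    rw [div_eq_iff hne] at h2
    exact h2.symm
  have : Nm1 * (algebraMap (Polynomial ℚ) (RatFunc ℚ) Nm1.denom * B * C) =
      algebraMap (Polynomial ℚ) (RatFunc ℚ) Nm1.num * B * C := by
    rw [← hdenom]; ring
  rw [this]
  exact lp_add (lp_mul hN1 (key j (m - 1)).1)
    (lp_mul (lp_mul (lp_alg _) hB) hC)
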